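/- Let X be a Hausdorff topological space and let G be a Hausdorff topological group acting continuously on X by homeomorphisms. Let H be a subsemigroup of G and K a compact subgroup of G such that every element of H normalises K. Then the semigroup HK = {hk : h ∈ H, k ∈ K} acts distally on X if and only if H acts distally on X. -/

import Mathlib

open Pointwise

/-- A family `S` of self-maps of a topological space `X` acts distally if for every pair of
distinct points `x, y`, the closure of `{(f x, f y) : f ∈ S}` in `X × X` does not meet the
diagonal. -/
def ActsDistally {X : Type*} [TopologicalSpace X] (S : Set (X → X)) : Prop :=
  ∀ x y : X, x ≠ y → ∀ d : X, (d, d) ∉ closure ((fun f => (f x, f y)) '' S)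

/-- If a Hausdorff topological group `G` acts continuously on a Hausdorff space `X`, `H` is a
subsemigroup of `G` and `K` a compact subgroup of `G` normalised by every element of `H`, then
the semigroup `HK` acts distally on `X` iff `H` acts distally on `X`. -/
theorem stmt2 {G X : Type*} [Group G] [TopologicalSpace G] [IsTopologicalGroup G] [T2Space G]
    [TopologicalSpace X] [T2Space X] [MulAction G X] [ContinuousSMul G X]
    (H : Subsemigroup G) (K : Subgroup G) (hK : IsCompact (K : Set G))
    (hnorm : ∀ h ∈ H, ∀ k ∈ K, h * k * h⁻¹ ∈ K) :
    ActsDistally {f : X → X | ∃ h ∈ H, ∃ k ∈ K, f = fun x => (h * k) • x} ↔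
      ActsDistally {f : X → X | ∃ h ∈ H, f = fun x => h • x} := by
  constructor
  · intro hHK x y hxy d hd
    refine hHK x y hxy d (closure_mono ?_ hd)
    rintro p ⟨f, ⟨h, hh, rfl⟩, rfl⟩
    exact ⟨_, ⟨h, hh, 1, one_mem K, by simp⟩, rfl⟩
  · intro hH x y hxy d hd
    set A : Set (X × X) :=
      (fun f : X → X => (f x, f y)) '' {f | ∃ h ∈ H, f = fun x => h • x} with hA
    have hsub : (fun f : X → X => (f x, f y)) ''
        {f : X → X | ∃ h ∈ H, ∃ k ∈ K, f = fun x => (h * k) • x}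
        ⊆ (K : Set G) • closure A := by
      rintro p ⟨f, ⟨h, hh, k, hk, rfl⟩, rfl⟩
      refine ⟨h * k * h⁻¹, hnorm h hh k hk,
        ((h : G) • x, h • y), subset_closure ⟨fun z => h • z, ⟨h, hh, rfl⟩, rfl⟩, ?_⟩
      simp only [Prod.smul_mk, smul_smul]
      group
    have hclosed : IsClosed ((K : Set G) • closure A) :=
      IsClosed.smul_left_of_isCompact isClosed_closure hK
    have hmem : (d, d) ∈ (K : Set G) • closure A := closure_minimal hsub hclosed hd
    obtain ⟨c, hc, p, hp, hcp⟩ := hmem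
    have hp' : p = (c⁻¹ • d, c⁻¹ • d) := by
      have h2 : c • p = (d, d) := hcp
      have : c⁻¹ • (c • p) = c⁻¹ • ((d, d) : X × X) := by rw [h2]
      simpa [Prod.smul_def] using this
    exact hH x y hxy (c⁻¹ • d) (hp' ▸ hp)
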